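/- arXiv:math/0504296 — 2 statements merged into one kernel-verified Lean document; each statement's English description precedes it below -/
import Mathlib

section
/- Let H be a pre-Lie algebra with a nonassociative permutative connected coproduct satisfying the distributive law Δ(a∘b) = a⊗b + Δ(a)∘b. Then H decomposes as a direct sum H = Prim(H) ⊕ H², where Prim(H) = ker Δ and H² is the image of the pre-Lie product (the span of all products a∘b). -/
open TensorProduct

variable (K : Type) [Field K] [CharZero K]
variable (H : Type) [AddCommGroup H] [Module K H]

/-- The permutation `τ₂₃` of the second and third factors of `(H⊗H)⊗H`. -/
noncomputable def tau23 :
    TensorProduct K (TensorProduct K H H) H →ₗ[K]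
      TensorProduct K (TensorProduct K H H) H :=
  (TensorProduct.assoc K H H H).symm.toLinearMap ∘ₗ
    LinearMap.lTensor H (TensorProduct.comm K H H).toLinearMap ∘ₗ
      (TensorProduct.assoc K H H H).toLinearMap

/-- The subspace `p ⊗ q` of `M ⊗ M` spanned by tensors of elements of the
submodules `p` and `q`. -/
noncomputable def tensSub (M : Type) [AddCommGroup M] [Module K M]
    (p q : Submodule K M) : Submodule K (TensorProduct K M M) :=
  LinearMap.range (TensorProduct.map p.subtype q.subtype)

/-- The coradical-type filtration: `C₁ = ker Δ`,
`Cₙ = {x | Δ(x) ∈ Σ_{i=1}^{n−1} C_i ⊗ C_{n−i}}` (and `C₀ = 0`). -/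
noncomputable def Cfil (M : Type) [AddCommGroup M] [Module K M]
    (D : M →ₗ[K] TensorProduct K M M) : ℕ → Submodule K M
  | 0 => ⊥
  | n + 1 =>
    Submodule.comap D
      (∑ j ∈ (Finset.range n).attach,
        tensSub K M (Cfil M D (j.1 + 1)) (Cfil M D (n - j.1)))
  termination_by n => n
  decreasing_by
  · have := Finset.mem_range.mp j.2; omega
  · have := Finset.mem_range.mp j.2; omega

section Aux
variable {K H}
variable (μ : H →ₗ[K] H →ₗ[K] H) (Δ : H →ₗ[K] TensorProduct K H H)

/-! ### tensSub API -/

lemma tmul_mem_tensSub {p q : Submodule K H} {a b : H} (ha : a ∈ p) (hb : b ∈ q) :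
    a ⊗ₜ[K] b ∈ tensSub K H p q :=
  ⟨(⟨a, ha⟩ : p) ⊗ₜ[K] (⟨b, hb⟩ : q), rfl⟩

lemma tensSub_mapped {V : Type} [AddCommGroup V] [Module K V] {p q : Submodule K H}
    (f : TensorProduct K H H →ₗ[K] V) {r : Submodule K V}
    (h : ∀ a ∈ p, ∀ b ∈ q, f (a ⊗ₜ[K] b) ∈ r) :
    ∀ U ∈ tensSub K H p q, f U ∈ r := by
  rintro _ ⟨W, rfl⟩
  induction W using TensorProduct.induction_on with
  | zero => simpa using r.zero_mem
  | tmul x y => simpa [TensorProduct.map_tmul] using h x.1 x.2 y.1 y.2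
  | add x y hx hy => rw [map_add, map_add]; exact r.add_mem hx hy

lemma tensSub_le {p q : Submodule K H} {r : Submodule K (TensorProduct K H H)}
    (h : ∀ a ∈ p, ∀ b ∈ q, a ⊗ₜ[K] b ∈ r) : tensSub K H p q ≤ r := by
  intro U hU
  simpa using tensSub_mapped LinearMap.id (by simpa using h) U hU

lemma tensSub_mono {p q p' q' : Submodule K H} (hp : p ≤ p') (hq : q ≤ q') :
    tensSub K H p q ≤ tensSub K H p' q' :=
  tensSub_le fun a ha b hb => tmul_mem_tensSub (hp ha) (hq hb)

lemma tensSub_bot_left (q : Submodule K H) : tensSub K H ⊥ q = ⊥ := by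
  refine le_antisymm (tensSub_le ?_) bot_le
  rintro a ha b -
  rw [(Submodule.mem_bot K).mp ha, TensorProduct.zero_tmul]
  exact Submodule.zero_mem _

lemma sum_le_submodule {ι : Type*} {s : Finset ι} {f : ι → Submodule K (TensorProduct K H H)}
    {r : Submodule K (TensorProduct K H H)} (h : ∀ j ∈ s, f j ≤ r) :
    ∑ j ∈ s, f j ≤ r := by
  classical
  refine Finset.sum_induction f (· ≤ r) (fun a b ha hb => ?_) bot_le h
  rw [Submodule.add_eq_sup]; exact sup_le ha hb

/-- rTensor with a map that acts as scalar `c` on `p`. -/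
lemma rTensor_tensSub_smul {p q : Submodule K H} {f : H →ₗ[K] H} {c : K}
    (hf : ∀ a ∈ p, f a = c • a) :
    ∀ U ∈ tensSub K H p q, LinearMap.rTensor H f U = c • U := by
  intro U hU
  have : LinearMap.rTensor H f U - c • U ∈ (⊥ : Submodule K (TensorProduct K H H)) := by
    refine tensSub_mapped (LinearMap.rTensor H f - c • LinearMap.id) ?_ U hU
    intro a ha b hb
    simp [LinearMap.rTensor_tmul, hf a ha, TensorProduct.smul_tmul']
  exact sub_eq_zero.mp ((Submodule.mem_bot K).mp this)

lemma rTensor_tensSub_mem {p q : Submodule K H} {f : H →ₗ[K] H} {p' : Submodule K H}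
    (hf : ∀ a ∈ p, f a ∈ p') :
    ∀ U ∈ tensSub K H p q, LinearMap.rTensor H f U ∈ tensSub K H p' q := by
  refine tensSub_mapped _ ?_
  intro a ha b hb
  rw [LinearMap.rTensor_tmul]
  exact tmul_mem_tensSub (hf a ha) hb

/-! ### Cfil API -/

lemma Cfil_succ (n : ℕ) :
    Cfil K H Δ (n + 1) =
      Submodule.comap Δ (∑ j ∈ Finset.range n,
        tensSub K H (Cfil K H Δ (j + 1)) (Cfil K H Δ (n - j))) := by
  rw [Cfil]
  congr 1
  rw [← Finset.sum_attach (Finset.range n) (fun j => tensSub K H (Cfil K H Δ (j + 1)) (Cfil K H Δ (n - j)))]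

lemma Cfil_zero : Cfil K H Δ 0 = ⊥ := by rw [Cfil]

lemma Cfil_one : Cfil K H Δ 1 = LinearMap.ker Δ := by
  rw [Cfil_succ]
  simp only [Finset.range_zero, Finset.sum_empty]
  rfl

lemma Cfil_mono : Monotone (Cfil K H Δ) := by
  have key : ∀ n, ∀ m < n, Cfil K H Δ m ≤ Cfil K H Δ (m + 1) := by
    intro n
    induction n with
    | zero => omega
    | succ n ih =>
      intro m hm
      rcases Nat.lt_or_ge m n with h | h
      · exact ih m h
      · have hmn : m = n := by omega
        subst hmn
        match m with
        | 0 => rw [Cfil_zero]; exact bot_le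
        | (m + 1) =>
          rw [Cfil_succ, Cfil_succ]
          refine Submodule.comap_mono (sum_le_submodule fun j hj => ?_)
          have hj' := Finset.mem_range.mp hj
          have h1 : tensSub K H (Cfil K H Δ (j + 1)) (Cfil K H Δ (m - j)) ≤
              tensSub K H (Cfil K H Δ (j + 1)) (Cfil K H Δ (m + 1 - j)) := by
            refine tensSub_mono le_rfl ?_
            have he : m + 1 - j = (m - j) + 1 := by omega
            rw [he]
            exact ih (m - j) (by omega)
          refine le_trans h1 (Finset.single_le_sum
            (f := fun j => tensSub K H (Cfil K H Δ (j + 1)) (Cfil K H Δ (m + 1 - j)))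
            (fun i _ => bot_le) (Finset.mem_range.mpr (by omega)))
  exact monotone_nat_of_le_succ (fun n => key (n + 1) n (by omega))

lemma Cfil_le {m n : ℕ} (h : m ≤ n) : Cfil K H Δ m ≤ Cfil K H Δ n := Cfil_mono Δ h

set_option linter.unusedSectionVars false

/-- The main operator `Φ = ∘ ∘ Δ`. -/
noncomputable def Phi : H →ₗ[K] H := TensorProduct.lift μ ∘ₗ Δ

noncomputable def D1 : TensorProduct K H H →ₗ[K] TensorProduct K H H :=
  LinearMap.rTensor H (TensorProduct.lift μ) ∘ₗ tau23 K H ∘ₗ LinearMap.rTensor H Δ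

noncomputable def D2 : TensorProduct K H H →ₗ[K] TensorProduct K H H :=
  LinearMap.lTensor H (TensorProduct.lift μ) ∘ₗ (TensorProduct.assoc K H H H).toLinearMap
    ∘ₗ LinearMap.rTensor H Δ

noncomputable def D3 : TensorProduct K H H →ₗ[K] TensorProduct K H H :=
  LinearMap.lTensor H (TensorProduct.lift μ.flip) ∘ₗ (TensorProduct.assoc K H H H).toLinearMap
    ∘ₗ LinearMap.rTensor H Δ

noncomputable def Psi : TensorProduct K H H →ₗ[K] TensorProduct K H H :=
  LinearMap.rTensor H (Phi μ Δ) + D2 μ Δ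

noncomputable def Psi' : TensorProduct K H H →ₗ[K] TensorProduct K H H :=
  LinearMap.rTensor H (Phi μ Δ) + D3 μ Δ

lemma tau23_tmul (x y z : H) :
    tau23 K H ((x ⊗ₜ[K] y) ⊗ₜ[K] z) = (x ⊗ₜ[K] z) ⊗ₜ[K] y := by
  simp [tau23]

lemma D1_tmul (a b : H) :
    D1 μ Δ (a ⊗ₜ[K] b) = LinearMap.rTensor H (μ.flip b) (Δ a) := by
  have key : ∀ T : TensorProduct K H H,
      LinearMap.rTensor H (TensorProduct.lift μ) (tau23 K H (T ⊗ₜ[K] b))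
        = LinearMap.rTensor H (μ.flip b) T := by
    intro T
    induction T using TensorProduct.induction_on with
    | zero => simp
    | tmul u v => rw [tau23_tmul]; simp
    | add u v hu hv =>
      rw [TensorProduct.add_tmul, map_add, map_add, hu, hv, map_add]
  simp only [D1, LinearMap.comp_apply, LinearMap.rTensor_tmul]
  exact key (Δ a)

lemma D2_tmul (a b : H) :
    D2 μ Δ (a ⊗ₜ[K] b) = LinearMap.lTensor H (μ.flip b) (Δ a) := by
  have key : ∀ T : TensorProduct K H H,
      LinearMap.lTensor H (TensorProduct.lift μ)
        ((TensorProduct.assoc K H H H) (T ⊗ₜ[K] b))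
        = LinearMap.lTensor H (μ.flip b) T := by
    intro T
    induction T using TensorProduct.induction_on with
    | zero => simp
    | tmul u v => simp
    | add u v hu hv =>
      rw [TensorProduct.add_tmul, map_add, map_add, hu, hv, map_add]
  simp only [D2, LinearMap.comp_apply, LinearMap.rTensor_tmul,
    LinearEquiv.coe_coe]
  exact key (Δ a)

/-- Distributive law as an operator identity. -/
lemma dlawOp (hdlaw : ∀ x y : H,
      Δ (μ x y) = x ⊗ₜ[K] y + LinearMap.rTensor H (μ.flip y) (Δ x)
        + LinearMap.lTensor H (μ.flip y) (Δ x)) :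
    Δ ∘ₗ TensorProduct.lift μ = LinearMap.id + D1 μ Δ + D2 μ Δ := by
  apply TensorProduct.ext'
  intro a b
  simp only [LinearMap.comp_apply, LinearMap.add_apply, LinearMap.id_apply,
    TensorProduct.lift.tmul, D1_tmul, D2_tmul]
  exact hdlaw a b

/-- NAP relation: `D₁ ∘ Δ = (Φ ⊗ 1) ∘ Δ`. -/
lemma napOp (hnap : tau23 K H ∘ₗ LinearMap.rTensor H Δ ∘ₗ Δ = LinearMap.rTensor H Δ ∘ₗ Δ) :
    D1 μ Δ ∘ₗ Δ = LinearMap.rTensor H (Phi μ Δ) ∘ₗ Δ := by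
  have : D1 μ Δ ∘ₗ Δ
      = LinearMap.rTensor H (TensorProduct.lift μ) ∘ₗ (tau23 K H ∘ₗ LinearMap.rTensor H Δ ∘ₗ Δ) := by
    rw [D1]; rfl
  rw [this, hnap, Phi, LinearMap.rTensor_comp]
  rfl

lemma DeltaPhi (hdlaw : ∀ x y : H,
      Δ (μ x y) = x ⊗ₜ[K] y + LinearMap.rTensor H (μ.flip y) (Δ x)
        + LinearMap.lTensor H (μ.flip y) (Δ x))
    (hnap : tau23 K H ∘ₗ LinearMap.rTensor H Δ ∘ₗ Δ = LinearMap.rTensor H Δ ∘ₗ Δ) :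
    Δ ∘ₗ Phi μ Δ = Δ + Psi μ Δ ∘ₗ Δ := by
  have h1 : Δ ∘ₗ Phi μ Δ = (Δ ∘ₗ TensorProduct.lift μ) ∘ₗ Δ := by rw [Phi]; rfl
  rw [h1, dlawOp μ Δ hdlaw]
  have h2 : (LinearMap.id + D1 μ Δ + D2 μ Δ) ∘ₗ Δ
      = Δ + D1 μ Δ ∘ₗ Δ + D2 μ Δ ∘ₗ Δ := by
    ext x; simp
  rw [h2, napOp μ Δ hnap, Psi]
  ext x; simp; abel

/-- Pre-Lie relation, elementwise: `Φ (lift μ T) = lift μ T + lift μ (Ψ\' T)`. -/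
lemma PhiLift (hpre : ∀ a b c : H,
      μ (μ a b) c - μ a (μ b c) = μ (μ a c) b - μ a (μ c b))
    (hdlaw : ∀ x y : H,
      Δ (μ x y) = x ⊗ₜ[K] y + LinearMap.rTensor H (μ.flip y) (Δ x)
        + LinearMap.lTensor H (μ.flip y) (Δ x))
    (T : TensorProduct K H H) :
    Phi μ Δ (TensorProduct.lift μ T)
      = TensorProduct.lift μ T + TensorProduct.lift μ (Psi' μ Δ T) := by
  set A := TensorProduct.lift μ ∘ₗ LinearMap.rTensor H (TensorProduct.lift μ) ∘ₗ tau23 K H with hA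
  set B := TensorProduct.lift μ ∘ₗ LinearMap.lTensor H (TensorProduct.lift μ)
    ∘ₗ (TensorProduct.assoc K H H H).toLinearMap with hB
  set A' := TensorProduct.lift μ ∘ₗ LinearMap.rTensor H (TensorProduct.lift μ) with hA'
  set B' := TensorProduct.lift μ ∘ₗ LinearMap.lTensor H (TensorProduct.lift μ.flip)
    ∘ₗ (TensorProduct.assoc K H H H).toLinearMap with hB'
  have key3 : A + B = A' + B' := by
    apply TensorProduct.ext_threefold
    intro x y z
    simp only [hA, hB, hA', hB', LinearMap.add_apply, LinearMap.comp_apply,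
      LinearEquiv.coe_coe, TensorProduct.assoc_tmul, tau23_tmul,
      LinearMap.rTensor_tmul, LinearMap.lTensor_tmul, TensorProduct.lift.tmul,
      LinearMap.flip_apply]
    have h := hpre x z y
    rw [sub_eq_sub_iff_add_eq_add] at h
    exact h
  have hD1 : TensorProduct.lift μ (D1 μ Δ T) = A (LinearMap.rTensor H Δ T) := by
    simp [D1, hA]
  have hD2 : TensorProduct.lift μ (D2 μ Δ T) = B (LinearMap.rTensor H Δ T) := by
    simp [D2, hB]
  have hD3 : TensorProduct.lift μ (D3 μ Δ T) = B' (LinearMap.rTensor H Δ T) := by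
    simp [D3, hB']
  have hrT : TensorProduct.lift μ (LinearMap.rTensor H (Phi μ Δ) T)
      = A' (LinearMap.rTensor H Δ T) := by
    rw [hA']
    simp only [LinearMap.comp_apply]
    congr 1
    rw [Phi, LinearMap.rTensor_comp]
    rfl
  have hdl : Δ (TensorProduct.lift μ T) = T + D1 μ Δ T + D2 μ Δ T := by
    have := dlawOp μ Δ hdlaw
    have h2 := congrArg (fun (f : TensorProduct K H H →ₗ[K] TensorProduct K H H) => f T) this
    simpa using h2
  have : Phi μ Δ (TensorProduct.lift μ T)
      = TensorProduct.lift μ T + (A + B) (LinearMap.rTensor H Δ T) := by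
    rw [Phi, LinearMap.comp_apply, hdl]
    simp only [map_add, LinearMap.add_apply, hD1, hD2]
    try abel
  rw [this, key3]
  simp only [LinearMap.add_apply, Psi', map_add, hD3, hrT]
  try abel

section Filt
set_option linter.unusedSectionVars false

lemma lTensor_tensSub_mem {p q : Submodule K H} {f : H →ₗ[K] H} {q' : Submodule K H}
    (hf : ∀ b ∈ q, f b ∈ q') :
    ∀ U ∈ tensSub K H p q, LinearMap.lTensor H f U ∈ tensSub K H p q' := by
  refine tensSub_mapped _ ?_
  intro a ha b hb
  rw [LinearMap.lTensor_tmul]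
  exact tmul_mem_tensSub ha (hf b hb)

lemma mem_sum_single {ι : Type} [DecidableEq ι] {s : Finset ι}
    {f : ι → Submodule K (TensorProduct K H H)} {j : ι} (hj : j ∈ s)
    {x : TensorProduct K H H} (hx : x ∈ f j) : x ∈ ∑ i ∈ s, f i :=
  Finset.single_le_sum (f := f) (fun i _ => bot_le) hj hx

lemma D3_tmul (a b : H) :
    D3 μ Δ (a ⊗ₜ[K] b) = LinearMap.lTensor H (μ b) (Δ a) := by
  have key : ∀ T : TensorProduct K H H,
      LinearMap.lTensor H (TensorProduct.lift μ.flip)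
        ((TensorProduct.assoc K H H H) (T ⊗ₜ[K] b))
        = LinearMap.lTensor H (μ b) T := by
    intro T
    induction T using TensorProduct.induction_on with
    | zero => simp
    | tmul u v => simp
    | add u v hu hv =>
      rw [TensorProduct.add_tmul, map_add, map_add, hu, hv, map_add]
  simp only [D3, LinearMap.comp_apply, LinearMap.rTensor_tmul, LinearEquiv.coe_coe]
  exact key (Δ a)

variable (hdlaw : ∀ x y : H,
      Δ (μ x y) = x ⊗ₜ[K] y + LinearMap.rTensor H (μ.flip y) (Δ x)
        + LinearMap.lTensor H (μ.flip y) (Δ x))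

include hdlaw in
lemma mul_mem_Cfil : ∀ i j (a b : H), a ∈ Cfil K H Δ i → b ∈ Cfil K H Δ j →
    μ a b ∈ Cfil K H Δ (i + j) := by
  intro i
  induction i using Nat.strong_induction_on with
  | _ i ih =>
    intro j a b ha hb
    match i with
    | 0 =>
      have : a = 0 := by simpa [Cfil_zero] using ha
      simp [this]
    | (i' + 1) =>
      match j with
      | 0 =>
        have : b = 0 := by simpa [Cfil_zero] using hb
        simp [this]
      | (j' + 1) =>
        have harith : i' + 1 + (j' + 1) = (i' + j' + 1) + 1 := by omega
        rw [harith, Cfil_succ, Submodule.mem_comap, hdlaw a b]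
        refine Submodule.add_mem _ (Submodule.add_mem _ ?_ ?_) ?_
        · -- a ⊗ b term
          refine mem_sum_single (Finset.mem_range.mpr (show i' < i' + j' + 1 by omega)) ?_
          have : i' + j' + 1 - i' = j' + 1 := by omega
          rw [this]
          exact tmul_mem_tensSub ha hb
        · -- rTensor term
          have hDa : Δ a ∈ ∑ s ∈ Finset.range i',
              tensSub K H (Cfil K H Δ (s + 1)) (Cfil K H Δ (i' - s)) := by
            rw [Cfil_succ, Submodule.mem_comap] at ha; exact ha
          refine sum_le_submodule (r := Submodule.comap (LinearMap.rTensor H (μ.flip b)) _)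
            (fun s hs => ?_) hDa
          have hs' := Finset.mem_range.mp hs
          intro U hU
          rw [Submodule.mem_comap]
          have hU' : LinearMap.rTensor H (μ.flip b) U ∈
              tensSub K H (Cfil K H Δ (s + 1 + (j' + 1))) (Cfil K H Δ (i' - s)) := by
            refine rTensor_tensSub_mem (fun u hu => ?_) U hU
            exact ih (s + 1) (by omega) (j' + 1) u b hu hb
          refine mem_sum_single (Finset.mem_range.mpr
            (show s + j' + 1 < i' + j' + 1 by omega)) ?_
          have h1 : s + j' + 1 + 1 = s + 1 + (j' + 1) := by omega
          have h2 : i' + j' + 1 - (s + j' + 1) = i' - s := by omega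
          rw [h1, h2]
          exact hU'
        · -- lTensor term
          have hDa : Δ a ∈ ∑ s ∈ Finset.range i',
              tensSub K H (Cfil K H Δ (s + 1)) (Cfil K H Δ (i' - s)) := by
            rw [Cfil_succ, Submodule.mem_comap] at ha; exact ha
          refine sum_le_submodule (r := Submodule.comap (LinearMap.lTensor H (μ.flip b)) _)
            (fun s hs => ?_) hDa
          have hs' := Finset.mem_range.mp hs
          intro U hU
          rw [Submodule.mem_comap]
          have hU' : LinearMap.lTensor H (μ.flip b) U ∈
              tensSub K H (Cfil K H Δ (s + 1)) (Cfil K H Δ (i' - s + (j' + 1))) := by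
            refine lTensor_tensSub_mem (fun v hv => ?_) U hU
            exact ih (i' - s) (by omega) (j' + 1) v b hv hb
          refine mem_sum_single (Finset.mem_range.mpr
            (show s < i' + j' + 1 by omega)) ?_
          have h2 : i' + j' + 1 - s = i' - s + (j' + 1) := by omega
          rw [h2]
          exact hU'

lemma Delta_mem_of_Cfil_succ {n : ℕ} {x : H} (hx : x ∈ Cfil K H Δ (n + 1)) :
    Δ x ∈ tensSub K H (Cfil K H Δ n) ⊤ := by
  rw [Cfil_succ, Submodule.mem_comap] at hx
  refine sum_le_submodule (fun j hj => ?_) hx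
  have hj' := Finset.mem_range.mp hj
  exact tensSub_mono (Cfil_le Δ (by omega)) le_top

include hdlaw in
lemma Phi_mem_Cfil {i : ℕ} {x : H} (hx : x ∈ Cfil K H Δ i) : Phi μ Δ x ∈ Cfil K H Δ i := by
  match i with
  | 0 =>
    have : x = 0 := by simpa [Cfil_zero] using hx
    simp [this]
  | (n + 1) =>
    rw [Cfil_succ, Submodule.mem_comap] at hx
    rw [Phi, LinearMap.comp_apply]
    refine sum_le_submodule (r := Submodule.comap (TensorProduct.lift μ) (Cfil K H Δ (n+1)))
      (fun j hj => ?_) hx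
    have hj' := Finset.mem_range.mp hj
    intro U hU
    rw [Submodule.mem_comap]
    refine tensSub_mapped (TensorProduct.lift μ) (fun a ha b hb => ?_) U hU
    rw [TensorProduct.lift.tmul]
    have := mul_mem_Cfil μ Δ hdlaw (j + 1) (n - j) a b ha hb
    exact Cfil_le Δ (by omega) this

include hdlaw in
lemma D2_lower {n : ℕ} : ∀ U ∈ tensSub K H (Cfil K H Δ (n + 1)) ⊤,
    D2 μ Δ U ∈ tensSub K H (Cfil K H Δ n) ⊤ := by
  refine tensSub_mapped _ (fun a ha b _ => ?_)
  rw [D2_tmul]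
  exact lTensor_tensSub_mem (fun v _ => Submodule.mem_top) _ (Delta_mem_of_Cfil_succ (Δ := Δ) ha)

include hdlaw in
lemma D3_lower {n : ℕ} : ∀ U ∈ tensSub K H (Cfil K H Δ (n + 1)) ⊤,
    D3 μ Δ U ∈ tensSub K H (Cfil K H Δ n) ⊤ := by
  refine tensSub_mapped _ (fun a ha b _ => ?_)
  rw [D3_tmul]
  exact lTensor_tensSub_mem (fun v _ => Submodule.mem_top) _ (Delta_mem_of_Cfil_succ (Δ := Δ) ha)

end Filt

section Eig
set_option linter.unusedSectionVars false
open Polynomial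

/-- Eigenspace of `Φ` for the natural eigenvalue `k`. -/
noncomputable def eig (k : ℕ) : Submodule K H :=
  LinearMap.ker ((Phi μ Δ : Module.End K H) - (k : K) • (1 : Module.End K H))

lemma mem_eig {k : ℕ} {x : H} : x ∈ eig μ Δ k ↔ Phi μ Δ x = (k : K) • x := by
  simp only [eig, LinearMap.mem_ker, LinearMap.sub_apply, LinearMap.smul_apply,
    Module.End.one_apply, sub_eq_zero]

/-- Powers of `Φ` on an eigenvector. -/
lemma pow_eig {k : ℕ} {x : H} (hx : x ∈ eig μ Δ k) (n : ℕ) :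
    ((Phi μ Δ : Module.End K H) ^ n) x = ((k : K) ^ n) • x := by
  induction n with
  | zero => simp
  | succ n ih =>
    rw [pow_succ', Module.End.mul_apply, ih, map_smul, (mem_eig μ Δ).mp hx, smul_smul,
      ← pow_succ]

/-- `aeval` of a polynomial at an eigenvector. -/
lemma aeval_eig {k : ℕ} {x : H} (hx : x ∈ eig μ Δ k) (P : K[X]) :
    Polynomial.aeval (Phi μ Δ : Module.End K H) P x = P.eval ((k : K)) • x := by
  induction P using Polynomial.induction_on' with
  | add p q hp hq => rw [map_add, LinearMap.add_apply, hp, hq, eval_add, add_smul]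
  | monomial n a =>
    rw [aeval_monomial, Module.End.mul_apply, pow_eig μ Δ hx, map_smul,
      Module.algebraMap_end_apply, smul_smul, eval_monomial]
    try ring_nf

lemma pow_mem_Cfil (hdlaw : ∀ x y : H,
      Δ (μ x y) = x ⊗ₜ[K] y + LinearMap.rTensor H (μ.flip y) (Δ x)
        + LinearMap.lTensor H (μ.flip y) (Δ x))
    {i : ℕ} {x : H} (hx : x ∈ Cfil K H Δ i) (n : ℕ) :
    ((Phi μ Δ : Module.End K H) ^ n) x ∈ Cfil K H Δ i := by
  induction n generalizing x with
  | zero => simpa using hx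
  | succ n ih =>
    rw [pow_succ, Module.End.mul_apply]
    exact ih (Phi_mem_Cfil μ Δ hdlaw hx)

variable (hdlaw : ∀ x y : H,
      Δ (μ x y) = x ⊗ₜ[K] y + LinearMap.rTensor H (μ.flip y) (Δ x)
        + LinearMap.lTensor H (μ.flip y) (Δ x))

include hdlaw in
lemma aeval_mem_Cfil {i : ℕ} (P : K[X]) {x : H} (hx : x ∈ Cfil K H Δ i) :
    Polynomial.aeval (Phi μ Δ : Module.End K H) P x ∈ Cfil K H Δ i := by
  induction P using Polynomial.induction_on' with
  | add p q hp hq =>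
    rw [map_add, LinearMap.add_apply]
    exact Submodule.add_mem _ hp hq
  | monomial n a =>
    rw [aeval_monomial, Module.End.mul_apply, Module.algebraMap_end_apply]
    exact Submodule.smul_mem _ _ (pow_mem_Cfil μ Δ hdlaw hx n)

/-- The nodal polynomial `∏_{k<n} (X - k)`. -/
noncomputable def nodP (n : ℕ) : K[X] := ∏ k ∈ Finset.range n, (X - C ((k : K)))

/-- The Lagrange basis polynomial for node `k` among `{0, …, n-1}`. -/
noncomputable def lagP (n k : ℕ) : K[X] := Lagrange.basis (Finset.range n) (Nat.cast : ℕ → K) k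

lemma nat_injOn (n : ℕ) : Set.InjOn (Nat.cast : ℕ → K) (Finset.range n) :=
  fun a _ b _ h => Nat.cast_injective h

lemma lagP_eval_self {n k : ℕ} (hk : k ∈ Finset.range n) :
    (lagP (K := K) n k).eval ((k : K)) = 1 :=
  Lagrange.eval_basis_self (nat_injOn n) hk

lemma lagP_eval_ne {n k l : ℕ} (hkl : k ≠ l) (hl : l ∈ Finset.range n) :
    (lagP (K := K) n k).eval ((l : K)) = 0 :=
  Lagrange.eval_basis_of_ne hkl hl

lemma lagP_sum {n : ℕ} (hn : 0 < n) :
    ∑ k ∈ Finset.range n, lagP (K := K) n k = 1 :=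
  Lagrange.sum_basis (nat_injOn n) ⟨0, Finset.mem_range.mpr hn⟩

lemma X_sub_mul_lagP {n k : ℕ} (hk : k ∈ Finset.range n) :
    (X - C ((k : K))) * lagP n k
      = C (Lagrange.nodalWeight (Finset.range n) (Nat.cast : ℕ → K) k) * nodP n := by
  rw [lagP, Lagrange.basis_eq_prod_sub_inv_mul_nodal_div hk,
    ← Lagrange.nodal_erase_eq_nodal_div hk]
  have hnod : nodP (K := K) n = Lagrange.nodal (Finset.range n) (Nat.cast : ℕ → K) := rfl
  rw [hnod, Lagrange.nodal_eq_mul_nodal_erase hk]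
  ring

/-- The eigen-projection of `x ∈ Cfil n` lies in the eigenspace. -/
lemma proj_mem_eig {n : ℕ} (hE : ∀ y ∈ Cfil K H Δ n,
      Polynomial.aeval (Phi μ Δ : Module.End K H) (nodP (K := K) n) y = 0)
    {k : ℕ} (hk : k ∈ Finset.range n) {x : H} (hx : x ∈ Cfil K H Δ n) :
    Polynomial.aeval (Phi μ Δ : Module.End K H) (lagP (K := K) n k) x ∈ eig μ Δ k := by
  rw [mem_eig, ← sub_eq_zero]
  have h1 : Phi μ Δ (Polynomial.aeval (Phi μ Δ : Module.End K H) (lagP (K := K) n k) x)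
      - (k : K) • Polynomial.aeval (Phi μ Δ : Module.End K H) (lagP (K := K) n k) x
      = Polynomial.aeval (Phi μ Δ : Module.End K H) ((X - C ((k : K))) * lagP (K := K) n k) x := by
    rw [map_mul, Module.End.mul_apply, map_sub, aeval_X, aeval_C, LinearMap.sub_apply,
      Module.algebraMap_end_apply]
  rw [h1, X_sub_mul_lagP hk, map_mul, Module.End.mul_apply, aeval_C,
    Module.algebraMap_end_apply, hE x hx, smul_zero]

end Eig

section Proj
set_option linter.unusedSectionVars false
open Polynomial

lemma rTensor_sum_apply (s : Finset ℕ) (f : ℕ → (H →ₗ[K] H)) (U : TensorProduct K H H) :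
    LinearMap.rTensor H (∑ k ∈ s, f k) U = ∑ k ∈ s, LinearMap.rTensor H (f k) U := by
  classical
  induction s using Finset.induction_on with
  | empty => simp
  | insert j t hj ih =>
    rw [Finset.sum_insert hj, Finset.sum_insert hj, ← ih]
    have : LinearMap.rTensor H (f j + ∑ k ∈ t, f k)
        = LinearMap.rTensor H (f j) + LinearMap.rTensor H (∑ k ∈ t, f k) := by
      apply TensorProduct.ext'
      intro a b
      simp [LinearMap.add_apply, TensorProduct.add_tmul]
    rw [this, LinearMap.add_apply]

/-- The eigen-projection operators `pₖ(Φ)`. -/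
noncomputable def projP (n k : ℕ) : Module.End K H :=
  Polynomial.aeval (Phi μ Δ : Module.End K H) (lagP (K := K) n k)

variable (hdlaw : ∀ x y : H,
      Δ (μ x y) = x ⊗ₜ[K] y + LinearMap.rTensor H (μ.flip y) (Δ x)
        + LinearMap.lTensor H (μ.flip y) (Δ x))

include hdlaw in
lemma proj_tensSub {n i k : ℕ}
    (hE : ∀ y ∈ Cfil K H Δ n,
      Polynomial.aeval (Phi μ Δ : Module.End K H) (nodP (K := K) n) y = 0)
    (hin : i ≤ n) (hk : k ∈ Finset.range n) :
    ∀ U ∈ tensSub K H (Cfil K H Δ i) ⊤,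
      LinearMap.rTensor H (projP μ Δ n k) U
        ∈ tensSub K H (eig μ Δ k ⊓ Cfil K H Δ i) ⊤ := by
  refine rTensor_tensSub_mem (fun a ha => ?_)
  exact Submodule.mem_inf.mpr
    ⟨proj_mem_eig μ Δ hE hk (Cfil_le Δ hin ha), aeval_mem_Cfil μ Δ hdlaw _ ha⟩

lemma proj_sum {n : ℕ} (hn : 0 < n) (U : TensorProduct K H H) :
    ∑ k ∈ Finset.range n, LinearMap.rTensor H (projP μ Δ n k) U = U := by
  rw [← rTensor_sum_apply]
  have h1 : (∑ k ∈ Finset.range n, projP μ Δ n k) = (1 : Module.End K H) := by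
    simp only [projP]
    rw [← map_sum (Polynomial.aeval (Phi μ Δ : Module.End K H)) _ (Finset.range n),
      lagP_sum hn, map_one]
  rw [h1, show (1 : Module.End K H) = LinearMap.id from rfl, LinearMap.rTensor_id,
    LinearMap.id_apply]

/-- `rTensor` of `pₖ(Φ)` on a tensor with first leg in an eigenspace. -/
lemma rT_proj_eig_smul {n k l : ℕ} {s q : Submodule K H} :
    ∀ U ∈ tensSub K H (eig μ Δ l ⊓ s) q,
      LinearMap.rTensor H (projP μ Δ n k) U = (lagP (K := K) n k).eval ((l : K)) • U := by
  refine rTensor_tensSub_smul (fun a ha => ?_)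
  exact aeval_eig μ Δ (Submodule.mem_inf.mp ha).1 _

lemma rT_Phi_eig_smul {m : ℕ} {s q : Submodule K H} :
    ∀ U ∈ tensSub K H (eig μ Δ m ⊓ s) q,
      LinearMap.rTensor H (Phi μ Δ) U = (m : K) • U := by
  refine rTensor_tensSub_smul (fun a ha => ?_)
  exact (mem_eig μ Δ).mp (Submodule.mem_inf.mp ha).1

/-- The sum `G(m,j) = Σ_{k<m} eig(k)∩C(j) ⊗ H`. -/
noncomputable def Gsum (m j : ℕ) : Submodule K (TensorProduct K H H) :=
  ∑ k ∈ Finset.range m, tensSub K H (eig μ Δ k ⊓ Cfil K H Δ j) ⊤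

lemma piece_le_Gsum {m j k : ℕ} (hk : k < m) :
    tensSub K H (eig μ Δ k ⊓ Cfil K H Δ j) ⊤ ≤ Gsum μ Δ m j :=
  Finset.single_le_sum (f := fun k => tensSub K H (eig μ Δ k ⊓ Cfil K H Δ j) ⊤)
    (fun i _ => bot_le) (Finset.mem_range.mpr hk)

lemma Gsum_mono {m j m' j' : ℕ} (hm : m ≤ m') (hj : j ≤ j') :
    Gsum μ Δ m j ≤ Gsum μ Δ m' j' := by
  refine sum_le_submodule (fun k hk => ?_)
  refine le_trans (tensSub_mono (inf_le_inf le_rfl (Cfil_le Δ hj)) le_rfl) ?_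
  exact piece_le_Gsum μ Δ (by have := Finset.mem_range.mp hk; omega)

lemma Gsum_le_tensSub {m j : ℕ} : Gsum μ Δ m j ≤ tensSub K H (Cfil K H Δ j) ⊤ :=
  sum_le_submodule (fun k _ => tensSub_mono inf_le_right le_rfl)

lemma Gsum_zero {j : ℕ} : Gsum μ Δ 0 j = ⊥ := by
  simp [Gsum]

lemma rT_proj_Gsum_zero {n m k : ℕ} (hk : k ∈ Finset.range n) (hmk : m ≤ k) :
    ∀ U ∈ Gsum μ Δ m n, LinearMap.rTensor H (projP μ Δ n k) U = 0 := by
  refine sum_le_submodule (r := LinearMap.ker (LinearMap.rTensor H (projP μ Δ n k)))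
    (fun l hl => ?_)
  intro U hU
  have h1 := Finset.mem_range.mp hl
  have h2 := Finset.mem_range.mp hk
  rw [LinearMap.mem_ker, rT_proj_eig_smul μ Δ U hU,
    lagP_eval_ne (show k ≠ l by omega) (Finset.mem_range.mpr (by omega)), zero_smul]

end Proj

section Core
set_option linter.unusedSectionVars false
open Polynomial

variable (hdlaw : ∀ x y : H,
      Δ (μ x y) = x ⊗ₜ[K] y + LinearMap.rTensor H (μ.flip y) (Δ x)
        + LinearMap.lTensor H (μ.flip y) (Δ x))
variable (hnap : tau23 K H ∘ₗ LinearMap.rTensor H Δ ∘ₗ Δ = LinearMap.rTensor H Δ ∘ₗ Δ)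

include hdlaw hnap in
lemma Delta_factor (c : K) (x : H) :
    Δ (Polynomial.aeval (Phi μ Δ : Module.End K H) (X - C (c + 1)) x)
      = Polynomial.aeval (Psi μ Δ : Module.End K (TensorProduct K H H)) (X - C c) (Δ x) := by
  have hD := congrArg (fun (f : H →ₗ[K] TensorProduct K H H) => f x) (DeltaPhi μ Δ hdlaw hnap)
  simp only [LinearMap.comp_apply, LinearMap.add_apply] at hD
  simp only [map_sub, aeval_X, aeval_C, LinearMap.sub_apply, Module.algebraMap_end_apply]
  rw [hD, map_smul, add_smul, one_smul]
  abel

include hdlaw hnap in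
lemma Delta_prod (s : Finset ℕ) (x : H) :
    Δ (Polynomial.aeval (Phi μ Δ : Module.End K H)
        (∏ k ∈ s, (X - C (((k : K)) + 1))) x)
      = Polynomial.aeval (Psi μ Δ : Module.End K (TensorProduct K H H))
        (∏ k ∈ s, (X - C ((k : K)))) (Δ x) := by
  classical
  induction s using Finset.induction_on generalizing x with
  | empty => simp
  | insert j t hj ih =>
    rw [Finset.prod_insert hj, Finset.prod_insert hj, map_mul, map_mul,
      Module.End.mul_apply, Module.End.mul_apply, Delta_factor μ Δ hdlaw hnap ((j : K)) _, ih]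

lemma nodP_split {k m : ℕ} (h : k < m) :
    nodP (K := K) m = (∏ l ∈ Finset.Ico (k + 1) m, (X - C ((l : K)))) * nodP (K := K) (k + 1) := by
  rw [nodP, nodP, Finset.range_eq_Ico, Finset.range_eq_Ico, mul_comm]
  exact (Finset.prod_Ico_consecutive _ (Nat.zero_le (k + 1)) (by omega)).symm

include hdlaw in
lemma D2_Gsum {n : ℕ}
    (hP2n : ∀ m, ∀ a ∈ eig μ Δ m ⊓ Cfil K H Δ n, Δ a ∈ Gsum μ Δ m (n - 1)) {m : ℕ} :
    ∀ U ∈ tensSub K H (eig μ Δ m ⊓ Cfil K H Δ n) ⊤, D2 μ Δ U ∈ Gsum μ Δ m (n - 1) := by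
  refine tensSub_mapped _ (fun a ha b _ => ?_)
  rw [D2_tmul]
  refine sum_le_submodule
    (r := Submodule.comap (LinearMap.lTensor H (μ.flip b)) (Gsum μ Δ m (n - 1)))
    (fun k hk => ?_) (hP2n m a ha)
  intro V hV
  rw [Submodule.mem_comap]
  exact piece_le_Gsum μ Δ (Finset.mem_range.mp hk)
    (lTensor_tensSub_mem (fun v _ => Submodule.mem_top) V hV)

lemma psi_sub_on_piece {n m : ℕ} {c : K}
    {U : TensorProduct K H H} (hU : U ∈ tensSub K H (eig μ Δ m ⊓ Cfil K H Δ n) ⊤) :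
    Psi μ Δ U - c • U = ((m : K) - c) • U + D2 μ Δ U := by
  have h1 : Psi μ Δ U = LinearMap.rTensor H (Phi μ Δ) U + D2 μ Δ U := rfl
  rw [h1, rT_Phi_eig_smul μ Δ U hU, sub_smul]
  abel

include hdlaw in
lemma kill {n : ℕ}
    (hP2n : ∀ m, ∀ a ∈ eig μ Δ m ⊓ Cfil K H Δ n, Δ a ∈ Gsum μ Δ m (n - 1)) :
    ∀ m, ∀ U ∈ tensSub K H (eig μ Δ m ⊓ Cfil K H Δ n) ⊤,
      Polynomial.aeval (Psi μ Δ : Module.End K (TensorProduct K H H))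
        (nodP (K := K) (m + 1)) U = 0 := by
  intro m
  induction m using Nat.strong_induction_on with
  | _ m ih =>
    intro U hU
    have hsplit : nodP (K := K) (m + 1) = nodP (K := K) m * (X - C ((m : K))) := by
      rw [nodP, nodP, Finset.prod_range_succ]
    rw [hsplit, map_mul, Module.End.mul_apply]
    have hfac : Polynomial.aeval (Psi μ Δ : Module.End K (TensorProduct K H H))
        (X - C ((m : K))) U = D2 μ Δ U := by
      rw [map_sub, aeval_X, aeval_C, LinearMap.sub_apply, Module.algebraMap_end_apply]
      have := psi_sub_on_piece μ Δ (c := (m : K)) hU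
      rw [sub_self, zero_smul, zero_add] at this
      exact this
    rw [hfac]
    have hD2 : D2 μ Δ U ∈ Gsum μ Δ m n :=
      Gsum_mono μ Δ le_rfl (Nat.sub_le n 1) (D2_Gsum μ Δ hdlaw hP2n U hU)
    refine sum_le_submodule (r := LinearMap.ker (Polynomial.aeval
      (Psi μ Δ : Module.End K (TensorProduct K H H)) (nodP (K := K) m)))
      (fun k hk => ?_) hD2
    intro V hV
    have hkm := Finset.mem_range.mp hk
    rw [LinearMap.mem_ker, nodP_split hkm, map_mul, Module.End.mul_apply,
      ih k hkm V (tensSub_mono (inf_le_inf le_rfl le_rfl) le_rfl hV), map_zero]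

include hdlaw in
lemma desc {n : ℕ}
    (hE : ∀ y ∈ Cfil K H Δ n,
      Polynomial.aeval (Phi μ Δ : Module.End K H) (nodP (K := K) n) y = 0) :
    ∀ i, i ≤ n → ∀ U ∈ tensSub K H (Cfil K H Δ i) ⊤,
      U + Psi μ Δ U = 0 → U = 0 := by
  intro i
  induction i with
  | zero =>
    intro _ U hU _
    rw [Cfil_zero, tensSub_bot_left] at hU
    exact (Submodule.mem_bot K).mp hU
  | succ i' ih =>
    intro hin U hU heq
    have hn : 0 < n := by omega
    set Uk := fun k => LinearMap.rTensor H (projP μ Δ n k) U with hUk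
    have hmem : ∀ k ∈ Finset.range n, Uk k ∈ tensSub K H (eig μ Δ k ⊓ Cfil K H Δ (i' + 1)) ⊤ :=
      fun k hk => proj_tensSub μ Δ hdlaw hE hin hk U hU
    have hsum : ∑ k ∈ Finset.range n, Uk k = U := proj_sum μ Δ hn U
    have hD2 : D2 μ Δ U ∈ tensSub K H (Cfil K H Δ i') ⊤ := D2_lower μ Δ hdlaw U hU
    -- U + Ψ U = Σ (1+k)•Uk + D2 U
    have heq2 : ∑ k ∈ Finset.range n, ((1 : K) + (k : K)) • Uk k + D2 μ Δ U = 0 := by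
      have h1 : Psi μ Δ U = LinearMap.rTensor H (Phi μ Δ) U + D2 μ Δ U := rfl
      have h2 : LinearMap.rTensor H (Phi μ Δ) U
          = ∑ k ∈ Finset.range n, ((k : K)) • Uk k := by
        conv_lhs => rw [← hsum]
        rw [map_sum]
        exact Finset.sum_congr rfl (fun k hk => rT_Phi_eig_smul μ Δ _ (hmem k hk))
      have h3 : ∑ k ∈ Finset.range n, ((1 : K) + (k : K)) • Uk k
          = U + LinearMap.rTensor H (Phi μ Δ) U := by
        have h4 : ∀ k ∈ Finset.range n, ((1 : K) + (k : K)) • Uk k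
            = Uk k + (k : K) • Uk k := by
          intro k _; rw [add_smul, one_smul]
        rw [Finset.sum_congr rfl h4, Finset.sum_add_distrib, hsum, ← h2]
      rw [h3, add_assoc, ← h1]
      exact heq
    -- project with pₖ
    have hUk' : ∀ k ∈ Finset.range n, Uk k ∈ tensSub K H (eig μ Δ k ⊓ Cfil K H Δ i') ⊤ := by
      intro k hk
      have hproj := congrArg (LinearMap.rTensor H (projP μ Δ n k)) heq2
      rw [map_add, map_sum, map_zero] at hproj
      have hdel : ∀ l ∈ Finset.range n,
          LinearMap.rTensor H (projP μ Δ n k) (((1 : K) + (l : K)) • Uk l)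
            = if l = k then ((1 : K) + (k : K)) • Uk k else 0 := by
        intro l hl
        rw [map_smul, rT_proj_eig_smul μ Δ _ (hmem l hl)]
        by_cases hlk : l = k
        · subst hlk
          rw [lagP_eval_self hl, if_pos rfl, one_smul]
        · rw [lagP_eval_ne (Ne.symm hlk) hl, if_neg hlk, zero_smul, smul_zero]
      rw [Finset.sum_congr rfl hdel, Finset.sum_ite_eq' (Finset.range n) k, if_pos hk] at hproj
      have hproj2 : ((1 : K) + (k : K)) • Uk k
          = -LinearMap.rTensor H (projP μ Δ n k) (D2 μ Δ U) := by
        rw [eq_neg_iff_add_eq_zero]; exact hproj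
      have hmem2 : LinearMap.rTensor H (projP μ Δ n k) (D2 μ Δ U)
          ∈ tensSub K H (eig μ Δ k ⊓ Cfil K H Δ i') ⊤ :=
        proj_tensSub μ Δ hdlaw hE (by omega) hk _ hD2
      have hne : (1 : K) + (k : K) ≠ 0 := by
        have : ((1 + k : ℕ) : K) ≠ 0 := Nat.cast_ne_zero.mpr (by omega)
        simpa using this
      have : Uk k = ((1 : K) + (k : K))⁻¹ • (((1 : K) + (k : K)) • Uk k) := by
        rw [smul_smul, inv_mul_cancel₀ hne, one_smul]
      rw [this, hproj2]
      exact Submodule.smul_mem _ _ (Submodule.neg_mem _ hmem2)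
    have hUlow : U ∈ tensSub K H (Cfil K H Δ i') ⊤ := by
      rw [← hsum]
      exact Submodule.sum_mem _ (fun k hk =>
        tensSub_mono inf_le_right le_rfl (hUk' k hk))
    exact ih (by omega) U hUlow heq

include hdlaw in
lemma lemC {n : ℕ}
    (hE : ∀ y ∈ Cfil K H Δ n,
      Polynomial.aeval (Phi μ Δ : Module.End K H) (nodP (K := K) n) y = 0)
    (hP2n : ∀ m, ∀ a ∈ eig μ Δ m ⊓ Cfil K H Δ n, Δ a ∈ Gsum μ Δ m (n - 1))
    (c : ℕ) :
    ∀ i, i ≤ n → ∀ U ∈ tensSub K H (Cfil K H Δ i) ⊤,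
      Psi μ Δ U - ((c : K)) • U ∈ Gsum μ Δ c n → U ∈ Gsum μ Δ (c + 1) n := by
  classical
  intro i
  induction i with
  | zero =>
    intro _ U hU _
    rw [Cfil_zero, tensSub_bot_left] at hU
    rw [(Submodule.mem_bot K).mp hU]
    exact Submodule.zero_mem _
  | succ i' ih =>
    intro hin U hU hhyp
    have hn : 0 < n := by omega
    set Uk := fun k => LinearMap.rTensor H (projP μ Δ n k) U with hUk
    have hmem : ∀ k ∈ Finset.range n, Uk k ∈ tensSub K H (eig μ Δ k ⊓ Cfil K H Δ (i' + 1)) ⊤ :=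
      fun k hk => proj_tensSub μ Δ hdlaw hE hin hk U hU
    have hsum : ∑ k ∈ Finset.range n, Uk k = U := proj_sum μ Δ hn U
    have hD2 : D2 μ Δ U ∈ tensSub K H (Cfil K H Δ i') ⊤ := D2_lower μ Δ hdlaw U hU
    have heq : Psi μ Δ U - ((c : K)) • U
        = ∑ k ∈ Finset.range n, (((k : K)) - (c : K)) • Uk k + D2 μ Δ U := by
      have h1 : Psi μ Δ U = LinearMap.rTensor H (Phi μ Δ) U + D2 μ Δ U := rfl
      have h2 : LinearMap.rTensor H (Phi μ Δ) U = ∑ k ∈ Finset.range n, ((k : K)) • Uk k := by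
        conv_lhs => rw [← hsum]
        rw [map_sum]
        exact Finset.sum_congr rfl (fun k hk => rT_Phi_eig_smul μ Δ _ (hmem k hk))
      have h3 : ((c : K)) • U = ∑ k ∈ Finset.range n, ((c : K)) • Uk k := by
        rw [← hsum, Finset.smul_sum]
      have h4 : ∀ k ∈ Finset.range n, (((k : K)) - (c : K)) • Uk k
          = ((k : K)) • Uk k - ((c : K)) • Uk k := fun k _ => sub_smul _ _ _
      rw [h1, h2, h3, Finset.sum_congr rfl h4, Finset.sum_sub_distrib]
      abel
    -- the components with k > c drop a filtration level
    have hUk' : ∀ k ∈ Finset.range n, c < k →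
        Uk k ∈ tensSub K H (eig μ Δ k ⊓ Cfil K H Δ i') ⊤ := by
      intro k hk hck
      have hproj := congrArg (LinearMap.rTensor H (projP μ Δ n k)) heq
      rw [map_add, map_sum] at hproj
      have hdel : ∀ l ∈ Finset.range n,
          LinearMap.rTensor H (projP μ Δ n k) ((((l : K)) - (c : K)) • Uk l)
            = if l = k then (((k : K)) - (c : K)) • Uk k else 0 := by
        intro l hl
        rw [map_smul, rT_proj_eig_smul μ Δ _ (hmem l hl)]
        by_cases hlk : l = k
        · subst hlk
          rw [lagP_eval_self hl, if_pos rfl, one_smul]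
        · rw [lagP_eval_ne (Ne.symm hlk) hl, if_neg hlk, zero_smul, smul_zero]
      rw [Finset.sum_congr rfl hdel, Finset.sum_ite_eq' (Finset.range n) k, if_pos hk] at hproj
      have hzero : LinearMap.rTensor H (projP μ Δ n k) (Psi μ Δ U - ((c : K)) • U) = 0 :=
        rT_proj_Gsum_zero μ Δ hk (by omega) _ hhyp
      rw [hzero] at hproj
      have hproj2 : (((k : K)) - (c : K)) • Uk k
          = -LinearMap.rTensor H (projP μ Δ n k) (D2 μ Δ U) := by
        rw [eq_neg_iff_add_eq_zero]; exact hproj.symm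
      have hmem2 : LinearMap.rTensor H (projP μ Δ n k) (D2 μ Δ U)
          ∈ tensSub K H (eig μ Δ k ⊓ Cfil K H Δ i') ⊤ :=
        proj_tensSub μ Δ hdlaw hE (by omega) hk _ hD2
      have hne : ((k : K)) - (c : K) ≠ 0 := by
        rw [sub_ne_zero]
        exact fun hcast => (by omega : k ≠ c) (Nat.cast_injective hcast)
      have hscal : Uk k = (((k : K)) - (c : K))⁻¹ • ((((k : K)) - (c : K)) • Uk k) := by
        rw [smul_smul, inv_mul_cancel₀ hne, one_smul]
      rw [hscal, hproj2]
      exact Submodule.smul_mem _ _ (Submodule.neg_mem _ hmem2)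
    -- split into good (k ≤ c) and bad (k > c) parts
    set S := Finset.range n with hS
    have hsplit : U = (∑ k ∈ S.filter (fun k => k ≤ c), Uk k)
        + (∑ k ∈ S.filter (fun k => ¬ k ≤ c), Uk k) := by
      rw [Finset.sum_filter_add_sum_filter_not, hsum]
    set Ugood := ∑ k ∈ S.filter (fun k => k ≤ c), Uk k with hUgood
    set Ubad := ∑ k ∈ S.filter (fun k => ¬ k ≤ c), Uk k with hUbad
    have hgood : Ugood ∈ Gsum μ Δ (c + 1) n := by
      refine Submodule.sum_mem _ (fun k hk => ?_)
      have hk1 := (Finset.mem_filter.mp hk).1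
      have hk2 := (Finset.mem_filter.mp hk).2
      exact piece_le_Gsum μ Δ (by omega)
        (tensSub_mono (inf_le_inf le_rfl (Cfil_le Δ hin)) le_rfl (hmem k hk1))
    have hbadlow : Ubad ∈ tensSub K H (Cfil K H Δ i') ⊤ := by
      refine Submodule.sum_mem _ (fun k hk => ?_)
      have hk1 := (Finset.mem_filter.mp hk).1
      have hk2 := (Finset.mem_filter.mp hk).2
      exact tensSub_mono inf_le_right le_rfl (hUk' k hk1 (by omega))
    have stab : ∀ V ∈ Gsum μ Δ (c + 1) n, Psi μ Δ V - ((c : K)) • V ∈ Gsum μ Δ c n := by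
      have hLmap : ∀ V : TensorProduct K H H, Psi μ Δ V - ((c : K)) • V
          = (Psi μ Δ - ((c : K)) • (LinearMap.id : TensorProduct K H H →ₗ[K] TensorProduct K H H)) V := by
        intro V; simp
      intro V hV
      rw [hLmap]
      refine sum_le_submodule (r := Submodule.comap _ (Gsum μ Δ c n)) (fun k hk => ?_) hV
      intro W hW
      rw [Submodule.mem_comap]
      have hk1 := Finset.mem_range.mp hk
      rw [← hLmap, psi_sub_on_piece μ Δ hW]
      refine Submodule.add_mem _ ?_ ?_
      · rcases Nat.lt_or_ge k c with hkc | hkc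
        · exact Submodule.smul_mem _ _ (piece_le_Gsum μ Δ hkc hW)
        · have : k = c := by omega
          subst this
          rw [sub_self, zero_smul]
          exact Submodule.zero_mem _
      · exact Gsum_mono μ Δ (by omega) (Nat.sub_le n 1) (D2_Gsum μ Δ hdlaw hP2n W hW)
    have hbadG : Psi μ Δ Ubad - ((c : K)) • Ubad ∈ Gsum μ Δ c n := by
      have hU' : Psi μ Δ U - ((c : K)) • U
          = (Psi μ Δ Ugood - ((c : K)) • Ugood) + (Psi μ Δ Ubad - ((c : K)) • Ubad) := by
        conv_lhs => rw [hsplit]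
        rw [map_add, smul_add]
        abel
      have := Submodule.sub_mem _ hhyp (stab Ugood hgood)
      rw [hU'] at this
      simpa using this
    have ihbad : Ubad ∈ Gsum μ Δ (c + 1) n := ih (by omega) Ubad hbadlow hbadG
    have hbadzero : Ubad = 0 := by
      have hcomp : ∀ k ∈ S.filter (fun k => ¬ k ≤ c),
          LinearMap.rTensor H (projP μ Δ n k) Ubad = Uk k := by
        intro k hk
        have hk1 := (Finset.mem_filter.mp hk).1
        have hk2 := (Finset.mem_filter.mp hk).2
        rw [hUbad, map_sum]
        have hdel : ∀ l ∈ S.filter (fun k => ¬ k ≤ c),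
            LinearMap.rTensor H (projP μ Δ n k) (Uk l) = if l = k then Uk k else 0 := by
          intro l hl
          have hl1 := (Finset.mem_filter.mp hl).1
          have hl2 := (Finset.mem_filter.mp hl).2
          rw [rT_proj_eig_smul μ Δ _ (hUk' l hl1 (by omega))]
          by_cases hlk : l = k
          · subst hlk; rw [lagP_eval_self hl1, if_pos rfl, one_smul]
          · rw [lagP_eval_ne (Ne.symm hlk) hl1, if_neg hlk, zero_smul]
        rw [Finset.sum_congr rfl hdel, Finset.sum_ite_eq' _ k, if_pos hk]
      have hzero : ∀ k ∈ S.filter (fun k => ¬ k ≤ c),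
          LinearMap.rTensor H (projP μ Δ n k) Ubad = 0 := by
        intro k hk
        have hk1 := (Finset.mem_filter.mp hk).1
        have hk2 := (Finset.mem_filter.mp hk).2
        exact rT_proj_Gsum_zero μ Δ hk1 (by omega) Ubad ihbad
      rw [hUbad]
      refine Finset.sum_eq_zero (fun k hk => ?_)
      rw [← hcomp k hk, hzero k hk]
    rw [hsplit, hbadzero, add_zero]
    exact hgood

include hdlaw hnap in
lemma mainInd : ∀ n : ℕ,
    (∀ x ∈ Cfil K H Δ n,
      Polynomial.aeval (Phi μ Δ : Module.End K H) (nodP (K := K) n) x = 0)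
    ∧ (∀ m, ∀ a ∈ eig μ Δ m ⊓ Cfil K H Δ n, Δ a ∈ Gsum μ Δ m (n - 1)) := by
  intro n
  induction n using Nat.strong_induction_on with
  | _ n ih =>
    match n with
    | 0 =>
      constructor
      · intro x hx
        rw [Cfil_zero] at hx
        rw [(Submodule.mem_bot K).mp hx, map_zero]
      · intro m a ha
        have : a = 0 := by
          have := (Submodule.mem_inf.mp ha).2
          rw [Cfil_zero] at this
          exact (Submodule.mem_bot K).mp this
        rw [this, map_zero]
        exact Submodule.zero_mem _
    | (n' + 1) =>
      have E' := (ih n' (by omega)).1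
      have P2' := (ih n' (by omega)).2
      constructor
      · -- P1 (n'+1)
        intro x hx
        have hDx : Δ x ∈ tensSub K H (Cfil K H Δ n') ⊤ := Delta_mem_of_Cfil_succ (Δ := Δ) hx
        set Q : Polynomial K := ∏ k ∈ Finset.range n', (X - C (((k : K)) + 1)) with hQ
        set w := Polynomial.aeval (Phi μ Δ : Module.End K H) Q x with hw
        have hDw : Δ w = Polynomial.aeval (Psi μ Δ : Module.End K (TensorProduct K H H))
            (nodP (K := K) n') (Δ x) := by
          rw [hw, hQ, Delta_prod μ Δ hdlaw hnap]
          rfl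
        have hkill : Polynomial.aeval (Psi μ Δ : Module.End K (TensorProduct K H H))
            (nodP (K := K) n') (Δ x) = 0 := by
          match n' with
          | 0 =>
            rw [Cfil_zero, tensSub_bot_left] at hDx
            rw [(Submodule.mem_bot K).mp hDx, map_zero]
          | (m' + 1) =>
            have hn' : 0 < m' + 1 := by omega
            conv_lhs => rw [← proj_sum μ Δ (n := m' + 1) hn' (Δ x)]
            rw [map_sum]
            refine Finset.sum_eq_zero (fun k hk => ?_)
            have hTk : LinearMap.rTensor H (projP μ Δ (m' + 1) k) (Δ x)
                ∈ tensSub K H (eig μ Δ k ⊓ Cfil K H Δ (m' + 1)) ⊤ :=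
              proj_tensSub μ Δ hdlaw E' le_rfl hk _ hDx
            have hkm := Finset.mem_range.mp hk
            rw [nodP_split hkm, map_mul, Module.End.mul_apply,
              kill μ Δ hdlaw P2' k _ hTk, map_zero]
        have hDw0 : Δ w = 0 := by rw [hDw, hkill]
        have hPhiw : Phi μ Δ w = 0 := by
          rw [Phi, LinearMap.comp_apply, hDw0, map_zero]
        have hfact : nodP (K := K) (n' + 1) = (X - C (((0 : ℕ) : K))) * Q := by
          rw [nodP, Finset.prod_range_succ']
          rw [hQ]
          rw [mul_comm]
          congr 1
          refine Finset.prod_congr rfl (fun i _ => ?_)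
          push_cast
          ring
        rw [hfact, map_mul, Module.End.mul_apply, ← hw, map_sub, aeval_X, aeval_C,
          LinearMap.sub_apply, Module.algebraMap_end_apply, hPhiw, Nat.cast_zero,
          zero_smul, sub_zero]
      · -- P2 (n'+1)
        intro m a ha
        have ha1 := (Submodule.mem_inf.mp ha).1
        have ha2 := (Submodule.mem_inf.mp ha).2
        have hDa : Δ a ∈ tensSub K H (Cfil K H Δ n') ⊤ := Delta_mem_of_Cfil_succ (Δ := Δ) ha2
        have hkey : Δ (Phi μ Δ a) = Δ a + Psi μ Δ (Δ a) := by
          have := congrArg (fun (f : H →ₗ[K] TensorProduct K H H) => f a)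
            (DeltaPhi μ Δ hdlaw hnap)
          simpa using this
        have hPhia : Phi μ Δ a = ((m : K)) • a := (mem_eig μ Δ).mp ha1
        have hmain : ((m : K)) • Δ a = Δ a + Psi μ Δ (Δ a) := by
          rw [← map_smul, ← hPhia, hkey]
        have hsimp : (n' + 1) - 1 = n' := by omega
        rw [hsimp]
        match m with
        | 0 =>
          have hzero : Δ a + Psi μ Δ (Δ a) = 0 := by
            rw [← hmain, Nat.cast_zero, zero_smul]
          have := desc μ Δ hdlaw E' n' le_rfl (Δ a) hDa hzero
          rw [this]
          exact Submodule.zero_mem _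
        | (c + 1) =>
          have hc : Psi μ Δ (Δ a) - ((c : K)) • (Δ a) = 0 := by
            have h5 : (((c + 1 : ℕ)) : K) = (c : K) + 1 := by push_cast; ring
            have hPsiDa : Psi μ Δ (Δ a) = ((c : K) + 1) • Δ a - Δ a := by
              rw [← h5, eq_sub_iff_add_eq, add_comm]
              exact hmain.symm
            rw [hPsiDa, add_smul, one_smul]
            abel
          exact lemC μ Δ hdlaw E' P2' c n' le_rfl (Δ a) hDa
            (by rw [hc]; exact Submodule.zero_mem _)

include hdlaw hnap in
lemma surjPsi' : ∀ i : ℕ, ∀ U ∈ tensSub K H (Cfil K H Δ i) ⊤,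
    ∃ T ∈ tensSub K H (Cfil K H Δ i) ⊤, T + Psi' μ Δ T = U := by
  intro i
  induction i with
  | zero =>
    intro U hU
    rw [Cfil_zero, tensSub_bot_left] at hU
    refine ⟨0, Submodule.zero_mem _, ?_⟩
    rw [(Submodule.mem_bot K).mp hU, map_zero, add_zero]
  | succ i' ih =>
    intro U hU
    have hE := (mainInd μ Δ hdlaw hnap (i' + 1)).1
    have hn : 0 < i' + 1 := by omega
    set Uk := fun k => LinearMap.rTensor H (projP μ Δ (i' + 1) k) U with hUk
    have hmem : ∀ k ∈ Finset.range (i' + 1),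
        Uk k ∈ tensSub K H (eig μ Δ k ⊓ Cfil K H Δ (i' + 1)) ⊤ :=
      fun k hk => proj_tensSub μ Δ hdlaw hE le_rfl hk U hU
    have hsum : ∑ k ∈ Finset.range (i' + 1), Uk k = U := proj_sum μ Δ hn U
    set T0 := ∑ k ∈ Finset.range (i' + 1), ((1 : K) + (k : K))⁻¹ • Uk k with hT0
    have hT0mem : T0 ∈ tensSub K H (Cfil K H Δ (i' + 1)) ⊤ := by
      refine Submodule.sum_mem _ (fun k hk => Submodule.smul_mem _ _ ?_)
      exact tensSub_mono inf_le_right le_rfl (hmem k hk)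
    have hkey : T0 + LinearMap.rTensor H (Phi μ Δ) T0 = U := by
      rw [hT0, map_sum, ← Finset.sum_add_distrib]
      rw [← hsum]
      refine Finset.sum_congr rfl (fun k hk => ?_)
      have hne : (1 : K) + (k : K) ≠ 0 := by
        have : ((1 + k : ℕ) : K) ≠ 0 := Nat.cast_ne_zero.mpr (by omega)
        simpa using this
      rw [map_smul, rT_Phi_eig_smul μ Δ _ (hmem k hk), smul_smul, ← add_smul]
      have hcoef : ((1 : K) + (k : K))⁻¹ + ((1 : K) + (k : K))⁻¹ * (k : K) = 1 := by
        field_simp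
      rw [hcoef, one_smul]
    have hstep : T0 + Psi' μ Δ T0 = U + D3 μ Δ T0 := by
      have h1 : Psi' μ Δ T0 = LinearMap.rTensor H (Phi μ Δ) T0 + D3 μ Δ T0 := rfl
      rw [h1, ← add_assoc, hkey]
    have hD3 : D3 μ Δ T0 ∈ tensSub K H (Cfil K H Δ i') ⊤ := D3_lower μ Δ hdlaw T0 hT0mem
    obtain ⟨T1, hT1mem, hT1⟩ := ih (D3 μ Δ T0) hD3
    refine ⟨T0 - T1, Submodule.sub_mem _ hT0mem
      (tensSub_mono (Cfil_le Δ (by omega)) le_rfl hT1mem), ?_⟩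
    rw [map_sub]
    have : T0 - T1 + (Psi' μ Δ T0 - Psi' μ Δ T1)
        = (T0 + Psi' μ Δ T0) - (T1 + Psi' μ Δ T1) := by abel
    rw [this, hstep, hT1]
    abel

lemma exists_tensSub (hconn : ∀ x : H, ∃ n, x ∈ Cfil K H Δ n) (T : TensorProduct K H H) :
    ∃ i, T ∈ tensSub K H (Cfil K H Δ i) ⊤ := by
  induction T using TensorProduct.induction_on with
  | zero => exact ⟨0, Submodule.zero_mem _⟩
  | tmul a b =>
    obtain ⟨n, hn⟩ := hconn a
    exact ⟨n, tmul_mem_tensSub hn Submodule.mem_top⟩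
  | add u v hu hv =>
    obtain ⟨i, hi⟩ := hu
    obtain ⟨j, hj⟩ := hv
    exact ⟨max i j, Submodule.add_mem _
      (tensSub_mono (Cfil_le Δ (le_max_left i j)) le_rfl hi)
      (tensSub_mono (Cfil_le Δ (le_max_right i j)) le_rfl hj)⟩

lemma aeval_comm (P : Polynomial K) (y : H) :
    Polynomial.aeval (Phi μ Δ : Module.End K H) P (Phi μ Δ y)
      = Phi μ Δ (Polynomial.aeval (Phi μ Δ : Module.End K H) P y) := by
  have h1 : (Polynomial.aeval (Phi μ Δ : Module.End K H) P)
        * (Polynomial.aeval (Phi μ Δ : Module.End K H) (X : Polynomial K))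
      = (Polynomial.aeval (Phi μ Δ : Module.End K H) (X : Polynomial K))
        * (Polynomial.aeval (Phi μ Δ : Module.End K H) P) := by
    rw [← map_mul, ← map_mul, mul_comm]
  have h2 := congrArg (fun f : Module.End K H => f y) h1
  simpa [aeval_X, Module.End.mul_apply] using h2

end Core

end Aux

variable (μ : H →ₗ[K] H →ₗ[K] H) (Δ : H →ₗ[K] TensorProduct K H H)

/-- Let `H` be a pre-Lie algebra (char 0) with a nonassociative
permutative connected coproduct satisfying the distributive law
`Δ(a∘b) = a⊗b + Δ(a)∘b` (derivation action of `H` on `H⊗H`).  Then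
`H = Prim(H) ⊕ H²`, where `Prim(H) = ker Δ` and `H²` is the image of the
pre-Lie product. -/
theorem prim_compl_square
    (hpre : ∀ a b c : H,
      μ (μ a b) c - μ a (μ b c) = μ (μ a c) b - μ a (μ c b))
    (hnap : tau23 K H ∘ₗ LinearMap.rTensor H Δ ∘ₗ Δ = LinearMap.rTensor H Δ ∘ₗ Δ)
    (hdlaw : ∀ x y : H,
      Δ (μ x y) = x ⊗ₜ[K] y + LinearMap.rTensor H (μ.flip y) (Δ x)
        + LinearMap.lTensor H (μ.flip y) (Δ x))
    (hconn : ∀ x : H, ∃ n, x ∈ Cfil K H Δ n) :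
    IsCompl (LinearMap.ker Δ) (LinearMap.range (TensorProduct.lift μ)) := by
  classical
  have E_all := fun n => (mainInd μ Δ hdlaw hnap n).1
  have P2_all := fun n => (mainInd μ Δ hdlaw hnap n).2
  constructor
  · -- Disjoint
    rw [Submodule.disjoint_def]
    intro x hxP hxM
    obtain ⟨T, hT⟩ := LinearMap.mem_range.mp hxM
    obtain ⟨i, hTmem⟩ := exists_tensSub Δ hconn T
    obtain ⟨T', hT'mem, hT'eq⟩ := surjPsi' μ Δ hdlaw hnap i T hTmem
    have hxw : Phi μ Δ (TensorProduct.lift μ T') = x := by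
      rw [PhiLift μ Δ hpre hdlaw T', ← map_add, hT'eq, hT]
    obtain ⟨nw, hw⟩ := hconn (TensorProduct.lift μ T')
    match nw, hw with
    | 0, hw =>
      have hz : TensorProduct.lift μ T' = 0 := by
        rw [Cfil_zero] at hw
        exact (Submodule.mem_bot K).mp hw
      rw [← hxw, hz, map_zero]
    | (nw' + 1), hw =>
      have h0mem : (0 : ℕ) ∈ Finset.range (nw' + 1) := Finset.mem_range.mpr (by omega)
      have hx0 : x ∈ eig μ Δ 0 := by
        rw [mem_eig, Phi, LinearMap.comp_apply, LinearMap.mem_ker.mp hxP, map_zero,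
          Nat.cast_zero, zero_smul]
      have hw0 : Polynomial.aeval (Phi μ Δ : Module.End K H)
          (lagP (K := K) (nw' + 1) 0) (TensorProduct.lift μ T') ∈ eig μ Δ 0 :=
        proj_mem_eig μ Δ (E_all (nw' + 1)) h0mem hw
      have hc1 : Polynomial.aeval (Phi μ Δ : Module.End K H)
          (lagP (K := K) (nw' + 1) 0) x = x := by
        rw [aeval_eig μ Δ hx0, lagP_eval_self h0mem, one_smul]
      have hc2 : Polynomial.aeval (Phi μ Δ : Module.End K H)
          (lagP (K := K) (nw' + 1) 0) x
          = Phi μ Δ (Polynomial.aeval (Phi μ Δ : Module.End K H)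
              (lagP (K := K) (nw' + 1) 0) (TensorProduct.lift μ T')) := by
        rw [← hxw, aeval_comm]
      have hc3 : Phi μ Δ (Polynomial.aeval (Phi μ Δ : Module.End K H)
          (lagP (K := K) (nw' + 1) 0) (TensorProduct.lift μ T')) = 0 := by
        rw [(mem_eig μ Δ).mp hw0, Nat.cast_zero, zero_smul]
      rw [← hc1, hc2, hc3]
  · -- Codisjoint
    rw [codisjoint_iff, eq_top_iff]
    intro x _
    obtain ⟨n, hx⟩ := hconn x
    match n, hx with
    | 0, hx =>
      have : x = 0 := by rw [Cfil_zero] at hx; exact (Submodule.mem_bot K).mp hx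
      rw [this]
      exact Submodule.zero_mem _
    | (n' + 1), hx =>
      have h0mem : (0 : ℕ) ∈ Finset.range (n' + 1) := Finset.mem_range.mpr (by omega)
      set xk := fun k => Polynomial.aeval (Phi μ Δ : Module.End K H)
        (lagP (K := K) (n' + 1) k) x with hxk
      have hsum : ∑ k ∈ Finset.range (n' + 1), xk k = x := by
        rw [hxk, ← LinearMap.sum_apply,
          ← map_sum (Polynomial.aeval (Phi μ Δ : Module.End K H)) _ (Finset.range (n' + 1)),
          lagP_sum (by omega), map_one, Module.End.one_apply]
      have hx0P : xk 0 ∈ LinearMap.ker Δ := by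
        have hmem0 : xk 0 ∈ eig μ Δ 0 ⊓ Cfil K H Δ (n' + 1) :=
          Submodule.mem_inf.mpr ⟨proj_mem_eig μ Δ (E_all (n' + 1)) h0mem hx,
            aeval_mem_Cfil μ Δ hdlaw _ hx⟩
        have hmem1 := P2_all (n' + 1) 0 _ hmem0
        rw [Gsum_zero] at hmem1
        exact LinearMap.mem_ker.mpr ((Submodule.mem_bot K).mp hmem1)
      have hrest : ∀ k ∈ (Finset.range (n' + 1)).erase 0,
          xk k ∈ LinearMap.range (TensorProduct.lift μ) := by
        intro k hk
        have hk0 : k ≠ 0 := (Finset.mem_erase.mp hk).1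
        have hkr : k ∈ Finset.range (n' + 1) := (Finset.mem_erase.mp hk).2
        have hxke : xk k ∈ eig μ Δ k := proj_mem_eig μ Δ (E_all (n' + 1)) hkr hx
        have hkK : (k : K) ≠ 0 := Nat.cast_ne_zero.mpr hk0
        have hform : xk k = TensorProduct.lift μ ((k : K)⁻¹ • Δ (xk k)) := by
          rw [map_smul]
          have hphi := (mem_eig μ Δ).mp hxke
          rw [Phi, LinearMap.comp_apply] at hphi
          rw [hphi, smul_smul, inv_mul_cancel₀ hkK, one_smul]
        rw [hform]
        exact LinearMap.mem_range_self _ _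
      have hxsplit : x = xk 0 + ∑ k ∈ (Finset.range (n' + 1)).erase 0, xk k := by
        rw [Finset.add_sum_erase _ xk h0mem, hsum]
      exact Submodule.mem_sup.mpr ⟨xk 0, hx0P,
        ∑ k ∈ (Finset.range (n' + 1)).erase 0, xk k,
        Submodule.sum_mem _ hrest, hxsplit.symm⟩
end

section
/- Let H be a pre-Lie algebra with a nonassociative permutative connected coproduct satisfying Δ(a∘b) = a⊗b + Δ(a)∘b. Then H is generated as a pre-Lie algebra by its primitive elements Prim(H) = ker Δ. -/
open TensorProduct

variable (K : Type) [Field K] [CharZero K]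
variable (H : Type) [AddCommGroup H] [Module K H]

variable (μ : H →ₗ[K] H →ₗ[K] H) (Δ : H →ₗ[K] TensorProduct K H H)


-- AUX PART (to be inserted before the theorem)

set_option linter.unusedSectionVars false
namespace Gen12

open TensorProduct LinearMap Submodule

variable {K : Type} [Field K] [CharZero K]
variable {H : Type} [AddCommGroup H] [Module K H]
variable {μ : H →ₗ[K] H →ₗ[K] H} {Δ : H →ₗ[K] TensorProduct K H H}

/-- The multiplication as a map on the tensor product. -/
noncomputable def mhat (μ : H →ₗ[K] H →ₗ[K] H) : TensorProduct K H H →ₗ[K] H :=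
  TensorProduct.lift μ

@[simp] lemma mhat_tmul (a b : H) : mhat μ (a ⊗ₜ[K] b) = μ a b := rfl

/-- auxiliary: the span of `A ⊗ B`. -/
noncomputable def tens2 (A B : Submodule K H) : Submodule K (TensorProduct K H H) :=
  LinearMap.range (TensorProduct.map A.subtype B.subtype)

lemma tmul_mem_tens2 {A B : Submodule K H} {a b : H} (ha : a ∈ A) (hb : b ∈ B) :
    a ⊗ₜ[K] b ∈ tens2 A B :=
  ⟨(⟨a, ha⟩ : A) ⊗ₜ[K] (⟨b, hb⟩ : B), rfl⟩

lemma tens2_induction {A B : Submodule K H} {P : TensorProduct K H H → Prop}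
    {w : TensorProduct K H H} (hw : w ∈ tens2 A B)
    (h0 : P 0) (hadd : ∀ u v, P u → P v → P (u + v))
    (htmul : ∀ a ∈ A, ∀ b ∈ B, P (a ⊗ₜ[K] b)) : P w := by
  obtain ⟨z, rfl⟩ := hw
  induction z using TensorProduct.induction_on with
  | zero => simpa using h0
  | tmul a b => simpa using htmul a a.2 b b.2
  | add u v hu hv => rw [map_add]; exact hadd _ _ hu hv

lemma tens2_mono {A A' B B' : Submodule K H} (hA : A ≤ A') (hB : B ≤ B') :
    tens2 A B ≤ tens2 A' B' := by
  intro w hw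
  refine tens2_induction hw (Submodule.zero_mem _)
    (fun u v hu hv => Submodule.add_mem _ hu hv)
    (fun a ha b hb => tmul_mem_tens2 (hA ha) (hB hb))

lemma tensSub_eq_tens2 (A B : Submodule K H) : tensSub K H A B = tens2 A B := rfl

lemma sum_le_submod {ι : Type*} {H' : Type*} [AddCommGroup H'] [Module K H']
    {s : Finset ι} {f : ι → Submodule K H'} {T : Submodule K H'}
    (h : ∀ i ∈ s, f i ≤ T) : ∑ i ∈ s, f i ≤ T := by
  classical
  induction s using Finset.induction_on with
  | empty => rw [Finset.sum_empty, Submodule.zero_eq_bot]; exact bot_le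
  | @insert a s ha ih =>
    rw [Finset.sum_insert ha, Submodule.add_eq_sup]
    exact sup_le (h a (Finset.mem_insert_self a s))
      (ih fun i hi => h i (Finset.mem_insert_of_mem hi))

/-- The depth filtration relative to a subspace `S`. -/
noncomputable def Gfil (Δ : H →ₗ[K] TensorProduct K H H) (S : Submodule K H) :
    ℕ → Submodule K H
  | 0 => LinearMap.ker Δ
  | m + 1 => Submodule.comap Δ (tens2 (Gfil Δ S m ⊓ S) S)

lemma Gfil_mono_succ (S : Submodule K H) (m : ℕ) : Gfil Δ S m ≤ Gfil Δ S (m + 1) := by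
  induction m with
  | zero =>
    intro x hx
    have hx0 : Δ x = 0 := hx
    show Δ x ∈ tens2 _ _
    rw [hx0]; exact Submodule.zero_mem _
  | succ m ih =>
    exact Submodule.comap_mono (tens2_mono (inf_le_inf_right _ ih) le_rfl)

lemma Gfil_mono (S : Submodule K H) {m n : ℕ} (h : m ≤ n) : Gfil Δ S m ≤ Gfil Δ S n := by
  induction n with
  | zero => exact Nat.le_zero.mp h ▸ le_rfl
  | succ n ih =>
    rcases Nat.lt_or_ge m (n+1) with h' | h'
    · exact le_trans (ih (Nat.lt_succ_iff.mp h')) (Gfil_mono_succ S n)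
    · have : m = n + 1 := le_antisymm h h'
      exact this ▸ le_rfl

end Gen12

namespace Gen12
section Core

variable {K : Type} [Field K] [CharZero K]
variable {H : Type} [AddCommGroup H] [Module K H]
variable {μ : H →ₗ[K] H →ₗ[K] H} {Δ : H →ₗ[K] TensorProduct K H H}

lemma tau23_tmul (p q b : H) :
    tau23 K H ((p ⊗ₜ[K] q) ⊗ₜ[K] b) = (p ⊗ₜ[K] b) ⊗ₜ[K] q := by
  simp [tau23]

lemma sub1 (u : TensorProduct K H H) (b : H) :
    LinearMap.rTensor H (mhat μ) (tau23 K H (u ⊗ₜ[K] b)) =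
      LinearMap.rTensor H (μ.flip b) u := by
  induction u using TensorProduct.induction_on with
  | zero => simp [show ((0 : TensorProduct K H H) ⊗ₜ[K] b) = 0 by simp]
  | tmul p q => rw [tau23_tmul]; simp
  | add u v hu hv =>
    rw [show ((u + v) ⊗ₜ[K] b) = u ⊗ₜ[K] b + v ⊗ₜ[K] b from TensorProduct.add_tmul u v b,
      map_add, map_add, hu, hv, map_add]

lemma sub2 (u : TensorProduct K H H) (b : H) :
    LinearMap.lTensor H (mhat μ) ((TensorProduct.assoc K H H H) (u ⊗ₜ[K] b)) =
      LinearMap.lTensor H (μ.flip b) u := by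
  induction u using TensorProduct.induction_on with
  | zero => simp [show ((0 : TensorProduct K H H) ⊗ₜ[K] b) = 0 by simp]
  | tmul p q => simp
  | add u v hu hv =>
    rw [show ((u + v) ⊗ₜ[K] b) = u ⊗ₜ[K] b + v ⊗ₜ[K] b from TensorProduct.add_tmul u v b,
      map_add, map_add, hu, hv, map_add]

lemma dlaw2map
    (hdlaw : ∀ x y : H,
      Δ (μ x y) = x ⊗ₜ[K] y + LinearMap.rTensor H (μ.flip y) (Δ x)
        + LinearMap.lTensor H (μ.flip y) (Δ x)) :
    Δ ∘ₗ mhat μ = (LinearMap.id : TensorProduct K H H →ₗ[K] TensorProduct K H H)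
      + (LinearMap.rTensor H (mhat μ) ∘ₗ tau23 K H ∘ₗ LinearMap.rTensor H Δ)
      + (LinearMap.lTensor H (mhat μ) ∘ₗ (TensorProduct.assoc K H H H).toLinearMap
          ∘ₗ LinearMap.rTensor H Δ) := by
  apply TensorProduct.ext'
  intro a b
  simp only [LinearMap.comp_apply, LinearMap.add_apply, LinearMap.id_apply,
    LinearMap.rTensor_tmul, LinearEquiv.coe_coe, mhat_tmul]
  rw [hdlaw a b, sub1, sub2]

lemma dlaw2
    (hdlaw : ∀ x y : H,
      Δ (μ x y) = x ⊗ₜ[K] y + LinearMap.rTensor H (μ.flip y) (Δ x)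
        + LinearMap.lTensor H (μ.flip y) (Δ x))
    (w : TensorProduct K H H) :
    Δ (mhat μ w) = w + LinearMap.rTensor H (mhat μ) (tau23 K H (LinearMap.rTensor H Δ w))
      + LinearMap.lTensor H (mhat μ) ((TensorProduct.assoc K H H H)
          (LinearMap.rTensor H Δ w)) := by
  have := LinearMap.congr_fun (dlaw2map hdlaw) w
  simpa [LinearMap.comp_apply] using this

end Core
end Gen12

namespace Gen12
section Main

variable {K : Type} [Field K] [CharZero K]
variable {H : Type} [AddCommGroup H] [Module K H]
variable {μ : H →ₗ[K] H →ₗ[K] H} {Δ : H →ₗ[K] TensorProduct K H H}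
variable {S : Submodule K H}

lemma mhat_mem_S (hS : ∀ a b : H, a ∈ S → b ∈ S → μ a b ∈ S)
    {A B : Submodule K H} (hA : A ≤ S) (hB : B ≤ S)
    {w : TensorProduct K H H} (hw : w ∈ tens2 A B) : mhat μ w ∈ S := by
  refine tens2_induction (P := fun w => mhat μ w ∈ S) hw ?_ ?_ ?_
  · simpa using S.zero_mem
  · intro u v hu hv; rw [map_add]; exact S.add_mem hu hv
  · intro a ha b hb; rw [mhat_tmul]; exact hS a b (hA ha) (hB hb)

lemma core
    (hS : ∀ a b : H, a ∈ S → b ∈ S → μ a b ∈ S)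
    (hnap : tau23 K H ∘ₗ LinearMap.rTensor H Δ ∘ₗ Δ = LinearMap.rTensor H Δ ∘ₗ Δ)
    (hdlaw : ∀ x y : H,
      Δ (μ x y) = x ⊗ₜ[K] y + LinearMap.rTensor H (μ.flip y) (Δ x)
        + LinearMap.lTensor H (μ.flip y) (Δ x)) :
    ∀ m : ℕ, ∀ x ∈ Gfil Δ S (m + 1),
      mhat μ (Δ x) - ((m : K) + 1) • x ∈ Gfil Δ S m := by
  intro m
  induction m with
  | zero =>
    intro x hx
    have hx' : Δ x ∈ tens2 (LinearMap.ker Δ ⊓ S) S := hx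
    have hz : LinearMap.rTensor H Δ (Δ x) = 0 := by
      refine tens2_induction (P := fun w => LinearMap.rTensor H Δ w = 0) hx' (by simp) ?_ ?_
      · intro u v hu hv; rw [map_add, hu, hv, add_zero]
      · intro a ha b hb
        rw [LinearMap.rTensor_tmul, (Submodule.mem_inf.mp ha).1, TensorProduct.zero_tmul]
    show Δ _ = 0
    rw [map_sub, dlaw2 hdlaw, hz]
    simp
  | succ m ih =>
    intro x hx
    have hx' : Δ x ∈ tens2 (Gfil Δ S (m + 1) ⊓ S) S := hx
    show Δ _ ∈ tens2 (Gfil Δ S m ⊓ S) S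
    have hsym : tau23 K H (LinearMap.rTensor H Δ (Δ x)) = LinearMap.rTensor H Δ (Δ x) := by
      have := LinearMap.congr_fun hnap x
      simpa [LinearMap.comp_apply] using this
    have hcast : (((m + 1 : ℕ) : K) + 1) = ((m : K) + 1) + 1 := by push_cast; ring
    have hΔ : Δ (mhat μ (Δ x) - (((m + 1 : ℕ) : K) + 1) • x)
        = (LinearMap.rTensor H (mhat μ) (LinearMap.rTensor H Δ (Δ x))
            - ((m : K) + 1) • Δ x)
          + LinearMap.lTensor H (mhat μ) ((TensorProduct.assoc K H H H)
              (LinearMap.rTensor H Δ (Δ x))) := by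
      rw [hcast, map_sub, dlaw2 hdlaw, hsym, map_smul,
        show (((m : K) + 1) + 1) • (Δ x) = ((m : K) + 1) • (Δ x) + Δ x by
          rw [add_smul, one_smul]]
      abel
    rw [hΔ]
    refine Submodule.add_mem _ ?_ ?_
    · -- first part
      refine tens2_induction hx' ?_ ?_ ?_
        (P := fun w => LinearMap.rTensor H (mhat μ) (LinearMap.rTensor H Δ w)
          - ((m : K) + 1) • w ∈ tens2 (Gfil Δ S m ⊓ S) S)
      · simpa using Submodule.zero_mem _
      · intro u v hu hv
        have : LinearMap.rTensor H (mhat μ) (LinearMap.rTensor H Δ (u + v))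
            - ((m : K) + 1) • (u + v)
            = (LinearMap.rTensor H (mhat μ) (LinearMap.rTensor H Δ u) - ((m : K) + 1) • u)
              + (LinearMap.rTensor H (mhat μ) (LinearMap.rTensor H Δ v) - ((m : K) + 1) • v) := by
          rw [map_add, map_add, smul_add]; abel
        rw [this]; exact Submodule.add_mem _ hu hv
      · intro a ha b hb
        obtain ⟨haG, haS⟩ := Submodule.mem_inf.mp ha
        have hΔa : Δ a ∈ tens2 (Gfil Δ S m ⊓ S) S := haG
        have he : mhat μ (Δ a) - ((m : K) + 1) • a ∈ Gfil Δ S m := ih a haG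
        have heS : mhat μ (Δ a) - ((m : K) + 1) • a ∈ S := by
          refine S.sub_mem ?_ (S.smul_mem _ haS)
          exact mhat_mem_S hS inf_le_right le_rfl hΔa
        have : LinearMap.rTensor H (mhat μ) (LinearMap.rTensor H Δ (a ⊗ₜ[K] b))
            - ((m : K) + 1) • (a ⊗ₜ[K] b)
            = (mhat μ (Δ a) - ((m : K) + 1) • a) ⊗ₜ[K] b := by
          rw [LinearMap.rTensor_tmul, LinearMap.rTensor_tmul, TensorProduct.sub_tmul,
            TensorProduct.smul_tmul']
        rw [this]
        exact tmul_mem_tens2 (Submodule.mem_inf.mpr ⟨he, heS⟩) hb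
    · -- lT part
      refine tens2_induction hx' ?_ ?_ ?_
        (P := fun w => LinearMap.lTensor H (mhat μ) ((TensorProduct.assoc K H H H)
          (LinearMap.rTensor H Δ w)) ∈ tens2 (Gfil Δ S m ⊓ S) S)
      · simpa using Submodule.zero_mem _
      · intro u v hu hv; rw [map_add, map_add, map_add]; exact Submodule.add_mem _ hu hv
      · intro a ha b hb
        obtain ⟨haG, haS⟩ := Submodule.mem_inf.mp ha
        have hΔa : Δ a ∈ tens2 (Gfil Δ S m ⊓ S) S := haG
        rw [LinearMap.rTensor_tmul]
        refine tens2_induction hΔa ?_ ?_ ?_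
          (P := fun u => LinearMap.lTensor H (mhat μ) ((TensorProduct.assoc K H H H)
            (u ⊗ₜ[K] b)) ∈ tens2 (Gfil Δ S m ⊓ S) S)
        · simpa using Submodule.zero_mem _
        · intro u v hu hv
          rw [show ((u + v) ⊗ₜ[K] b) = u ⊗ₜ[K] b + v ⊗ₜ[K] b from TensorProduct.add_tmul u v b,
            map_add, map_add]
          exact Submodule.add_mem _ hu hv
        · intro p hp q hq
          have : LinearMap.lTensor H (mhat μ) ((TensorProduct.assoc K H H H)
              ((p ⊗ₜ[K] q) ⊗ₜ[K] b)) = p ⊗ₜ[K] (μ q b) := by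
            simp
          rw [this]
          exact tmul_mem_tens2 hp (hS q b hq hb)

lemma gfil_le (hS : ∀ a b : H, a ∈ S → b ∈ S → μ a b ∈ S)
    (hprim : LinearMap.ker Δ ≤ S)
    (hnap : tau23 K H ∘ₗ LinearMap.rTensor H Δ ∘ₗ Δ = LinearMap.rTensor H Δ ∘ₗ Δ)
    (hdlaw : ∀ x y : H,
      Δ (μ x y) = x ⊗ₜ[K] y + LinearMap.rTensor H (μ.flip y) (Δ x)
        + LinearMap.lTensor H (μ.flip y) (Δ x)) :
    ∀ m : ℕ, Gfil Δ S m ≤ S := by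
  intro m
  induction m with
  | zero => exact hprim
  | succ m ih =>
    intro x hx
    have hx' : Δ x ∈ tens2 (Gfil Δ S m ⊓ S) S := hx
    have h1 : mhat μ (Δ x) ∈ S := mhat_mem_S hS inf_le_right le_rfl hx'
    have h2 : mhat μ (Δ x) - ((m : K) + 1) • x ∈ S :=
      ih (core hS hnap hdlaw m x hx)
    have h3 : ((m : K) + 1) • x ∈ S := by
      have := S.sub_mem h1 h2
      simpa using this
    have hne : ((m : K) + 1) ≠ 0 := Nat.cast_add_one_ne_zero m
    have := S.smul_mem (((m : K) + 1)⁻¹) h3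
    rwa [smul_smul, inv_mul_cancel₀ hne, one_smul] at this

end Main
end Gen12

namespace Gen12
section CfilPart

variable {K : Type} [Field K] [CharZero K]
variable {H : Type} [AddCommGroup H] [Module K H]
variable {μ : H →ₗ[K] H →ₗ[K] H} {Δ : H →ₗ[K] TensorProduct K H H}

lemma Cfil_succ (n : ℕ) :
    Cfil K H Δ (n + 1) = Submodule.comap Δ
      (∑ j ∈ Finset.range n, tens2 (Cfil K H Δ (j + 1)) (Cfil K H Δ (n - j))) := by
  rw [Cfil]
  congr 1
  exact Finset.sum_attach (Finset.range n)
    (fun j => tensSub K H (Cfil K H Δ (j + 1)) (Cfil K H Δ (n - j)))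

lemma Cfil_zero : Cfil K H Δ 0 = ⊥ := by rw [Cfil]

lemma Cfil_one : Cfil K H Δ 1 = LinearMap.ker Δ := by
  rw [Cfil_succ]
  rw [Finset.range_zero, Finset.sum_empty, Submodule.zero_eq_bot]
  rfl

lemma Cfil_mono_succ : ∀ n : ℕ, Cfil K H Δ n ≤ Cfil K H Δ (n + 1) := by
  intro n
  induction n using Nat.strong_induction_on with
  | _ n ih =>
    cases n with
    | zero => rw [Cfil_zero]; exact bot_le
    | succ q =>
      rw [Cfil_succ q, Cfil_succ (q + 1)]
      refine Submodule.comap_mono ?_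
      refine sum_le_submod ?_
      intro j hj
      have hjq : j < q := Finset.mem_range.mp hj
      have h1 : Cfil K H Δ (q - j) ≤ Cfil K H Δ (q + 1 - j) := by
        have : q + 1 - j = (q - j) + 1 := by omega
        rw [this]
        exact ih (q - j) (by omega)
      refine le_trans (tens2_mono le_rfl h1) ?_
      refine Finset.single_le_sum (f := fun j => tens2 (Cfil K H Δ (j + 1)) (Cfil K H Δ (q + 1 - j)))
        (fun i _ => ?_) (Finset.mem_range.mpr (by omega))
      rw [Submodule.zero_eq_bot]; exact bot_le

lemma Cfil_mono {m n : ℕ} (h : m ≤ n) : Cfil K H Δ m ≤ Cfil K H Δ n := by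
  induction n with
  | zero => exact Nat.le_zero.mp h ▸ le_rfl
  | succ n ih =>
    rcases Nat.lt_or_ge m (n + 1) with h' | h'
    · exact le_trans (ih (Nat.lt_succ_iff.mp h')) (Cfil_mono_succ n)
    · have : m = n + 1 := le_antisymm h h'
      exact this ▸ le_rfl

lemma cfil_le_gfil {S : Submodule K H} :
    ∀ q : ℕ, Cfil K H Δ q ≤ S → Cfil K H Δ (q + 1) ≤ Gfil Δ S q := by
  intro q
  induction q using Nat.strong_induction_on with
  | _ q ih =>
    intro hq
    cases q with
    | zero =>
      rw [Cfil_one]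
      intro x hx
      exact hx
    | succ k =>
      rw [Cfil_succ (k + 1)]
      show _ ≤ Submodule.comap Δ (tens2 (Gfil Δ S k ⊓ S) S)
      refine Submodule.comap_mono ?_
      refine sum_le_submod ?_
      intro j hj
      have hjk : j < k + 1 := Finset.mem_range.mp hj
      refine tens2_mono ?_ ?_
      · refine le_inf ?_ ?_
        · have h1 : Cfil K H Δ (j + 1) ≤ Gfil Δ S j := by
            refine ih j hjk ?_
            exact le_trans (Cfil_mono (by omega)) hq
          exact le_trans h1 (Gfil_mono S (by omega))
        · exact le_trans (Cfil_mono (by omega)) hq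
      · exact le_trans (Cfil_mono (by omega)) hq

end CfilPart
end Gen12


/-- Let `H` be a pre-Lie algebra (char 0) with a nonassociative
permutative connected coproduct satisfying `Δ(a∘b) = a⊗b + Δ(a)∘b`.  Then `H`
is generated as a pre-Lie algebra by `Prim(H) = ker Δ`: the only subspace of
`H` that is closed under the pre-Lie product and contains `ker Δ` is `H`
itself. -/
theorem generated_by_primitives
    (hpre : ∀ a b c : H,
      μ (μ a b) c - μ a (μ b c) = μ (μ a c) b - μ a (μ c b))
    (hnap : tau23 K H ∘ₗ LinearMap.rTensor H Δ ∘ₗ Δ = LinearMap.rTensor H Δ ∘ₗ Δ)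
    (hdlaw : ∀ x y : H,
      Δ (μ x y) = x ⊗ₜ[K] y + LinearMap.rTensor H (μ.flip y) (Δ x)
        + LinearMap.lTensor H (μ.flip y) (Δ x))
    (hconn : ∀ x : H, ∃ n, x ∈ Cfil K H Δ n) :
    ∀ S : Submodule K H,
      (∀ a b : H, a ∈ S → b ∈ S → μ a b ∈ S) →
      LinearMap.ker Δ ≤ S → S = ⊤ := by
  intro S hS hprim
  rw [Submodule.eq_top_iff']
  intro x
  obtain ⟨n, hn⟩ := hconn x
  have hC : ∀ n : ℕ, Cfil K H Δ n ≤ S := by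
    intro n
    induction n using Nat.strong_induction_on with
    | _ n ih =>
      cases n with
      | zero => rw [Gen12.Cfil_zero]; exact bot_le
      | succ q =>
        exact le_trans (Gen12.cfil_le_gfil q (ih q (Nat.lt_succ_self q)))
          (Gen12.gfil_le hS hprim hnap hdlaw q)
  exact hC n hn
end
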